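/- For positive integers α, β and all n ≥ 0 and 0 ≤ k ≤ n: E_{n,k}(α,β,q) = Σ_{j=0}^{k} (-1)^{k-j} q^{binom(k-j,2)} · qbinom(n+α+β, k-j) · qbinom(j+α+β-1, j) · [β+j]^n, where E_{n,k} is defined by E_{0,0}=1 and E_{n,k} = q^(β+k-1)[n-k+α]E_{n-1,k-1} + [k+β]E_{n-1,k} (zero outside 0 ≤ k ≤ n). -/

import Mathlib

open Finset

noncomputable section

abbrev K : Type := RatFunc ℚ

def qq : K := RatFunc.X

def qint (m : ℕ) : K := ∑ i ∈ Finset.range m, qq ^ i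

def qfact (m : ℕ) : K := ∏ i ∈ Finset.range m, qint (i + 1)

def qbinom (a b : ℕ) : K := qfact a / (qfact b * qfact (a - b))

def E (α β : ℕ) : ℕ → ℕ → K
  | 0, k => if k = 0 then 1 else 0
  | n + 1, 0 => qint β * E α β n 0
  | n + 1, k + 1 =>
      qq ^ (β + k) * qint (n - k + α) * E α β n k + qint (k + 1 + β) * E α β n (k + 1)

def poch (N : ℕ) : PowerSeries K :=
  ∏ i ∈ Finset.range N, (1 - PowerSeries.C (qq ^ i) * PowerSeries.X)

/-! ### Auxiliary lemmas -/

lemma qq_pow_ne_one (m : ℕ) (h : 1 ≤ m) : qq ^ m ≠ 1 := by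
  unfold qq
  rw [← RatFunc.algebraMap_X (K := ℚ), ← map_pow,
    ← map_one (algebraMap (Polynomial ℚ) (RatFunc ℚ))]
  intro hc
  have := RatFunc.algebraMap_injective (K := ℚ) hc
  have h2 := congrArg Polynomial.natDegree this
  simp [Polynomial.natDegree_X_pow] at h2
  omega

lemma one_sub_qq_ne : (1 : K) - qq ≠ 0 := by
  have h1 := qq_pow_ne_one 1 le_rfl
  simp only [pow_one] at h1
  intro h; exact h1 (sub_eq_zero.mp h).symm

lemma qint_mul_one_sub (m : ℕ) : (1 - qq) * qint m = 1 - qq ^ m := by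
  have := geom_sum_mul qq m
  unfold qint
  linear_combination -this

lemma qint_ne_zero (m : ℕ) (h : 1 ≤ m) : qint m ≠ 0 := by
  intro hc
  have h1 := qint_mul_one_sub m
  rw [hc, mul_zero] at h1
  exact qq_pow_ne_one m h (sub_eq_zero.mp h1.symm).symm

lemma qint_add (a b : ℕ) : qint (a + b) = qint a + qq ^ a * qint b := by
  apply mul_left_cancel₀ one_sub_qq_ne
  have h1 := qint_mul_one_sub (a+b)
  have h2 := qint_mul_one_sub a
  have h3 := qint_mul_one_sub b
  have : qq ^ (a+b) = qq ^ a * qq ^ b := pow_add qq a b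
  linear_combination h1 - h2 - qq^a * h3 - this

lemma qfact_succ (m : ℕ) : qfact (m + 1) = qfact m * qint (m + 1) := Finset.prod_range_succ _ _

lemma qfact_ne_zero (m : ℕ) : qfact m ≠ 0 := by
  induction m with
  | zero => simp [qfact]
  | succ n ih => rw [qfact_succ]; exact mul_ne_zero ih (qint_ne_zero _ (by omega))

lemma qfact_zero : qfact 0 = 1 := by simp [qfact]

lemma qbinom_zero (a : ℕ) : qbinom a 0 = 1 := by
  simp [qbinom, qfact_zero]
  exact qfact_ne_zero a

lemma qbinom_self (a : ℕ) : qbinom a a = 1 := by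
  simp only [qbinom, Nat.sub_self, qfact_zero, mul_one]
  exact div_self (qfact_ne_zero a)

lemma qbinom_pascal (N i : ℕ) (h : i + 1 ≤ N) :
    qbinom (N + 1) (i + 1) = qbinom N (i + 1) + qq ^ (N - i) * qbinom N i := by
  have e1 : N + 1 - (i + 1) = N - i := by omega
  have e2 : N - (i+1) = (N - i) - 1 := by omega
  have e3 : N - i = (N - i - 1) + 1 := by omega
  have hNi : qfact (N - i) = qfact (N - i - 1) * qint (N - i) := by
    rw [e3, qfact_succ, ← e3]
  have hkey : qint (N + 1) = qint (N - i) + qq ^ (N - i) * qint (i + 1) := by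
    rw [← qint_add]; congr 1; omega
  unfold qbinom
  rw [e1, e2, qfact_succ N, qfact_succ i, hNi]
  have h1 := qfact_ne_zero i
  have h2 := qfact_ne_zero (N - i - 1)
  have h3 := qint_ne_zero (i+1) (by omega)
  have h4 := qint_ne_zero (N-i) (by omega)
  rw [hkey]
  field_simp

lemma qbinom_absorb (N i : ℕ) (h : i + 1 ≤ N) :
    qint (i + 1) * qbinom N (i + 1) = qint (N - i) * qbinom N i := by
  have e2 : N - (i+1) = (N - i) - 1 := by omega
  have e3 : N - i = (N - i - 1) + 1 := by omega
  have hNi : qfact (N - i) = qfact (N - i - 1) * qint (N - i) := by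
    rw [e3, qfact_succ, ← e3]
  unfold qbinom
  rw [e2, qfact_succ i, hNi]
  have h1 := qfact_ne_zero i
  have h2 := qfact_ne_zero (N - i - 1)
  have h3 := qint_ne_zero (i+1) (by omega)
  have h4 := qint_ne_zero (N-i) (by omega)
  field_simp

lemma tri_succ (i : ℕ) : (i+1)*i/2 = i*(i-1)/2 + i := by
  have h1 : (i+1)*i/2 = (i+1).choose 2 := by rw [Nat.choose_two_right]; simp
  have h2 : i*(i-1)/2 = i.choose 2 := (Nat.choose_two_right i).symm
  rw [h1, h2, Nat.choose_succ_succ]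
  simp [Nat.choose_one_right, Nat.add_comm]

lemma tri_succ' (i : ℕ) : (i+1)*(i+1-1)/2 = i*(i-1)/2 + i := by
  simpa using tri_succ i

lemma key (α β n i j : ℕ) (hα : 1 ≤ α) (hβ : 1 ≤ β) (hij : i + j ≤ n) :
    (-1:K)^(i+1) * qq^((i+1)*i/2) * qbinom (n+1+α+β) (i+1) * qint (β+j)
    = qq^(β+(i+j)) * qint (n-(i+j)+α) * ((-1:K)^i * qq^(i*(i-1)/2) * qbinom (n+α+β) i)
    + qint ((i+j)+1+β) * ((-1:K)^(i+1) * qq^((i+1)*i/2) * qbinom (n+α+β) (i+1)) := by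
  set N := n + α + β with hN
  set A := n - (i+j) + α with hA
  have hiN : i + 1 ≤ N := by omega
  have h1 : qbinom (n+1+α+β) (i+1) = qbinom N (i+1) + qq ^ (N - i) * qbinom N i := by
    rw [show n+1+α+β = N+1 by omega]; exact qbinom_pascal N i hiN
  have h2 := qbinom_absorb N i hiN
  have h3 : qint ((i+j)+1+β) = qint (β+j) + qq^(β+j) * qint (i+1) := by
    rw [← qint_add]; congr 1; omega
  have h4 : qint (N - i) = qint A + qq^A * qint (β+j) := by
    rw [← qint_add]; congr 1; omega
  have h5 : qq^((i+1)*i/2) = qq^(i*(i-1)/2) * qq^i := by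
    rw [← pow_add, tri_succ]
  have h6 : qq^(N-i) = qq^A * qq^(β+j) := by
    rw [← pow_add]; congr 1; omega
  have h7 : qq^(β+(i+j)) = qq^(β+j) * qq^i := by
    rw [← pow_add]; congr 1; omega
  rw [h1, h3, h5, h7, pow_succ]
  linear_combination ((-1:K)^i*qq^(i*(i-1)/2)*qq^i*qq^(β+j)) * h2
    + ((-1:K)^i*qq^(i*(i-1)/2)*qq^i*qq^(β+j)*qbinom N i) * h4
    - ((-1:K)^i*qq^(i*(i-1)/2)*qq^i*qint (β+j)*qbinom N i) * h6

def termS (α β n k j : ℕ) : K :=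
  (-1:K)^(k-j) * qq^((k-j)*(k-j-1)/2) * qbinom (n+α+β) (k-j) * qbinom (j+α+β-1) j
    * qint (β+j)^n

def Sf (α β n k : ℕ) : K := ∑ j ∈ Finset.range (k+1), termS α β n k j

lemma S_rec (α β n k : ℕ) (hα : 1 ≤ α) (hβ : 1 ≤ β) (hk : k ≤ n) :
    Sf α β (n+1) (k+1)
      = qq^(β+k) * qint (n-k+α) * Sf α β n k + qint (k+1+β) * Sf α β n (k+1) := by
  have hterm : ∀ j ∈ Finset.range (k+1), termS α β (n+1) (k+1) j
      = qq^(β+k) * qint (n-k+α) * termS α β n k j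
        + qint (k+1+β) * termS α β n (k+1) j := by
    intro j hj
    rw [Finset.mem_range] at hj
    have hjk : j ≤ k := by omega
    have hkey := key α β n (k-j) j hα hβ (by omega)
    rw [show k - j + j = k from by omega] at hkey
    unfold termS
    rw [show k + 1 - j = (k-j) + 1 from by omega,
        show (k-j) + 1 - 1 = k - j from by omega]
    linear_combination (qbinom (j+α+β-1) j * qint (β+j)^n) * hkey
  have hlast : termS α β (n+1) (k+1) (k+1)
      = qint (k+1+β) * termS α β n (k+1) (k+1) := by
    unfold termS
    simp only [Nat.sub_self, pow_zero, one_mul, Nat.zero_sub, Nat.zero_mul,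
      Nat.zero_div, qbinom_zero]
    rw [show β + (k+1) = k+1+β from by omega, pow_succ]
    ring
  calc Sf α β (n+1) (k+1)
      = ∑ j ∈ Finset.range (k+1), termS α β (n+1) (k+1) j
          + termS α β (n+1) (k+1) (k+1) := Finset.sum_range_succ _ _
    _ = ∑ j ∈ Finset.range (k+1),
          (qq^(β+k) * qint (n-k+α) * termS α β n k j
            + qint (k+1+β) * termS α β n (k+1) j)
          + qint (k+1+β) * termS α β n (k+1) (k+1) := by
        rw [Finset.sum_congr rfl hterm, hlast]
    _ = qq^(β+k) * qint (n-k+α) * Sf α β n k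
          + qint (k+1+β) * (∑ j ∈ Finset.range (k+1), termS α β n (k+1) j
              + termS α β n (k+1) (k+1)) := by
        rw [Finset.sum_add_distrib, ← Finset.mul_sum, ← Finset.mul_sum]
        unfold Sf; ring
    _ = qq^(β+k) * qint (n-k+α) * Sf α β n k + qint (k+1+β) * Sf α β n (k+1) := by
        rw [← Finset.sum_range_succ]; rfl

open PowerSeries

lemma coeff_mul_one_sub (f : K⟦X⟧) (c : K) (n : ℕ) :
    (coeff (n+1)) (f * (1 - PowerSeries.C c * PowerSeries.X)) =
      coeff (n+1) f - c * coeff n f := by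
  rw [mul_sub, mul_one, map_sub]
  congr 1
  rw [show f * (PowerSeries.C c * PowerSeries.X) = PowerSeries.C c * (f * PowerSeries.X) by
    ring, coeff_C_mul, coeff_succ_mul_X]

lemma coeff_zero_mul_one_sub (f : K⟦X⟧) (c : K) :
    (coeff 0) (f * (1 - PowerSeries.C c * PowerSeries.X)) = coeff 0 f := by
  rw [mul_sub, mul_one, map_sub]
  rw [show f * (PowerSeries.C c * PowerSeries.X) = PowerSeries.C c * (f * PowerSeries.X) by
    ring, coeff_C_mul]
  simp

lemma poch_succ (N : ℕ) :
    poch (N+1) = poch N * (1 - PowerSeries.C (qq ^ N) * PowerSeries.X) :=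
  Finset.prod_range_succ _ _

lemma coeff_poch (N i : ℕ) :
    coeff i (poch N) =
      if i ≤ N then (-1:K)^i * qq^(i*(i-1)/2) * qbinom N i else 0 := by
  induction N generalizing i with
  | zero =>
    simp only [poch, Finset.range_zero, Finset.prod_empty]
    rcases i with _ | i
    · simp [qbinom_zero]
    · simp
  | succ N ih =>
    rw [poch_succ]
    rcases i with _ | i
    · rw [coeff_zero_mul_one_sub, ih]
      simp [qbinom_zero]
    · rw [coeff_mul_one_sub, ih, ih]
      rcases Nat.lt_trichotomy i N with h | h | h
      · rw [if_pos (by omega), if_pos (by omega), if_pos (by omega)]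
        rw [qbinom_pascal N i (by omega), tri_succ', pow_add]
        have hq : qq^(N-i) * qq^i = qq^N := by rw [← pow_add]; congr 1; omega
        linear_combination ((-1:K)^i * qq^(i*(i-1)/2) * qbinom N i) * hq
      · subst h
        rw [if_neg (show ¬ (i+1 ≤ i) from by omega), if_pos (le_refl i),
          if_pos (le_refl (i+1)), qbinom_self, qbinom_self, tri_succ', pow_add]
        ring
      · rw [if_neg (by omega), if_neg (by omega), if_neg (by omega)]
        simp

lemma Bmul (γ : ℕ) :
    poch (γ+1) * PowerSeries.mk (fun j => qbinom (j+γ) j) = 1 := by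
  induction γ with
  | zero =>
    have hp : poch 1 = 1 - PowerSeries.C (1 : K) * PowerSeries.X := by
      rw [show (1:ℕ) = 0 + 1 from rfl, poch_succ]
      simp [poch]
    rw [hp, mul_comm]
    ext n
    rcases n with _ | n
    · rw [coeff_zero_mul_one_sub]
      simp [qbinom_self]
    · rw [coeff_mul_one_sub]
      simp [qbinom_self, coeff_one]
  | succ γ ih =>
    have hstep : (PowerSeries.mk (fun j => qbinom (j+(γ+1)) j))
        * (1 - PowerSeries.C (qq ^ (γ+1)) * PowerSeries.X)
        = PowerSeries.mk (fun j => qbinom (j+γ) j) := by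
      ext n
      rcases n with _ | n
      · rw [coeff_zero_mul_one_sub]
        simp [qbinom_zero]
      · rw [coeff_mul_one_sub]
        simp only [coeff_mk]
        have hp := qbinom_pascal (n + γ + 1) n (by omega)
        rw [show n + γ + 1 - n = γ + 1 from by omega] at hp
        rw [show n + 1 + (γ + 1) = n + γ + 1 + 1 from by omega,
            show n + 1 + γ = n + γ + 1 from by omega,
            show n + (γ + 1) = n + γ + 1 from by omega]
        linear_combination hp
    rw [poch_succ]
    calc poch (γ+1) * (1 - PowerSeries.C (qq ^ (γ+1)) * PowerSeries.X) *
          PowerSeries.mk (fun j => qbinom (j+(γ+1)) j)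
        = poch (γ+1) * (PowerSeries.mk (fun j => qbinom (j+(γ+1)) j) *
            (1 - PowerSeries.C (qq ^ (γ+1)) * PowerSeries.X)) := by ring
      _ = 1 := by rw [hstep, ih]

lemma coeff_one_sub (c : K) (n : ℕ) :
    coeff n (1 - PowerSeries.C c * PowerSeries.X) =
      if n = 0 then 1 else if n = 1 then -c else 0 := by
  rw [map_sub, coeff_C_mul]
  rcases n with _ | _ | n <;> simp [coeff_one, coeff_X]

lemma rescale_one_sub (a c : K) :
    rescale a (1 - PowerSeries.C c * PowerSeries.X)
      = 1 - PowerSeries.C (c * a) * PowerSeries.X := by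
  ext n
  rw [coeff_rescale, coeff_one_sub, coeff_one_sub]
  rcases n with _ | _ | n <;> simp <;> ring

lemma coeff_prod_card (s : Finset ℕ) (c : ℕ → K) :
    ∀ m, s.card < m →
      coeff m (∏ i ∈ s, (1 - PowerSeries.C (c i) * PowerSeries.X)) = 0 := by
  induction s using Finset.induction_on with
  | empty =>
    intro m hm
    rcases m with _ | m
    · omega
    · simp [coeff_one]
  | insert a s ha ih =>
    intro m hm
    rw [Finset.card_insert_of_notMem ha] at hm
    rw [Finset.prod_insert ha, mul_comm]
    rcases m with _ | m
    · omega
    · rw [coeff_mul_one_sub, ih (m+1) (by omega)]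
      rcases m with _ | m
      · omega
      · rw [ih (m+1) (by omega)]; ring

lemma poch_factor (r γ M : ℕ) (h : r + γ ≤ M) :
    poch M = (∏ i ∈ Finset.range M \ Finset.Ico r (r+γ),
        (1 - PowerSeries.C (qq ^ i) * PowerSeries.X)) * rescale (qq^r) (poch γ) := by
  have hres : rescale (qq^r) (poch γ)
      = ∏ i ∈ Finset.Ico r (r+γ), (1 - PowerSeries.C (qq ^ i) * PowerSeries.X) := by
    rw [poch, map_prod]
    rw [Finset.prod_Ico_eq_prod_range]
    rw [show r + γ - r = γ from by omega]
    apply Finset.prod_congr rfl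
    intro i _
    rw [rescale_one_sub, ← pow_add, add_comm i r]
  have hsub : Finset.Ico r (r+γ) ⊆ Finset.range M := by
    intro x hx
    rw [Finset.mem_Ico] at hx
    rw [Finset.mem_range]
    omega
  rw [hres, poch]
  exact (Finset.prod_sdiff hsub).symm

lemma Ir_zero (α β n r : ℕ) (hα : 1 ≤ α) (hβ : 1 ≤ β) (hr : r ≤ n) :
    ∑ j ∈ Finset.range (n+2),
      ((-1:K)^(n+1-j) * qq^((n+1-j)*(n+1-j-1)/2) * qbinom (n+α+β) (n+1-j)
        * qbinom (j+α+β-1) j) * qq^(r*j) = 0 := by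
  set M := n + α + β with hM
  set g : K⟦X⟧ := rescale (qq^r) (PowerSeries.mk fun j => qbinom (j+(α+β-1)) j) with hg
  have hBm : poch (α+β) * PowerSeries.mk (fun j => qbinom (j+(α+β-1)) j) = 1 := by
    have := Bmul (α+β-1)
    rwa [show α+β-1+1 = α+β from by omega] at this
  have key : g * poch M
      = ∏ i ∈ Finset.range M \ Finset.Ico r (r+(α+β)),
          (1 - PowerSeries.C (qq ^ i) * PowerSeries.X) := by
    rw [poch_factor r (α+β) M (by omega)]
    rw [hg]
    calc rescale (qq^r) (PowerSeries.mk fun j => qbinom (j+(α+β-1)) j) *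
          ((∏ i ∈ Finset.range M \ Finset.Ico r (r+(α+β)),
            (1 - PowerSeries.C (qq ^ i) * PowerSeries.X)) * rescale (qq^r) (poch (α+β)))
        = (∏ i ∈ Finset.range M \ Finset.Ico r (r+(α+β)),
            (1 - PowerSeries.C (qq ^ i) * PowerSeries.X)) *
          (rescale (qq^r) (poch (α+β)) *
            rescale (qq^r) (PowerSeries.mk fun j => qbinom (j+(α+β-1)) j)) := by ring
      _ = _ := by rw [← map_mul, hBm, map_one, mul_one]
  have hsub : Finset.Ico r (r+(α+β)) ⊆ Finset.range M := by
    intro x hx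
    rw [Finset.mem_Ico] at hx
    rw [Finset.mem_range]
    omega
  have hcard : (Finset.range M \ Finset.Ico r (r+(α+β))).card = n := by
    rw [Finset.card_sdiff_of_subset hsub, Finset.card_range, Nat.card_Ico]
    omega
  have hzero : coeff (n+1) (g * poch M) = 0 := by
    rw [key]
    exact coeff_prod_card _ _ (n+1) (by omega)
  rw [coeff_mul] at hzero
  rw [Nat.sum_antidiagonal_eq_sum_range_succ_mk] at hzero
  rw [← hzero]
  apply Finset.sum_congr rfl
  intro j hj
  rw [Finset.mem_range] at hj
  rw [hg, coeff_rescale, coeff_mk, coeff_poch, if_pos (by omega)]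
  rw [← pow_mul, show j+(α+β-1) = j+α+β-1 from by omega]
  ring

def cf (α β n j : ℕ) : K :=
  (-1:K)^(n+1-j) * qq^((n+1-j)*(n+1-j-1)/2) * qbinom (n+α+β) (n+1-j) * qbinom (j+α+β-1) j

lemma S_vanish (α β n : ℕ) (hα : 1 ≤ α) (hβ : 1 ≤ β) : Sf α β n (n+1) = 0 := by
  have hpow : ((1:K)-qq)^n ≠ 0 := pow_ne_zero _ one_sub_qq_ne
  suffices h : ((1:K)-qq)^n * Sf α β n (n+1) = 0 by
    rcases mul_eq_zero.mp h with h' | h'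
    · exact absurd h' hpow
    · exact h'
  rw [Sf, Finset.mul_sum]
  have hterm : ∀ j ∈ Finset.range (n+1+1),
      ((1:K)-qq)^n * termS α β n (n+1) j
      = ∑ r ∈ Finset.range (n+1),
          (cf α β n j * qq^(r*j)) * ((-1:K)^r * (n.choose r : K) * qq^(β*r)) := by
    intro j _
    have h1 : ((1:K)-qq)^n * qint (β+j)^n
        = ∑ r ∈ Finset.range (n+1),
            qq^(r*j) * ((-1:K)^r * (n.choose r : K) * qq^(β*r)) := by
      rw [← mul_pow, qint_mul_one_sub,
        show ((1:K) - qq^(β+j)) = -(qq^(β+j)) + 1 from by ring, add_pow]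
      apply Finset.sum_congr rfl
      intro r _
      rw [one_pow, neg_pow, ← pow_mul, show (β+j)*r = β*r + r*j from by ring, pow_add]
      ring
    have h2 : termS α β n (n+1) j = cf α β n j * qint (β+j)^n := rfl
    rw [h2, show ((1:K)-qq)^n * (cf α β n j * qint (β+j)^n)
        = cf α β n j * (((1:K)-qq)^n * qint (β+j)^n) from by ring, h1, Finset.mul_sum]
    apply Finset.sum_congr rfl
    intro r _
    ring
  rw [Finset.sum_congr rfl hterm, Finset.sum_comm]
  apply Finset.sum_eq_zero
  intro r hr
  rw [Finset.mem_range] at hr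
  rw [← Finset.sum_mul]
  have hIr : ∑ j ∈ Finset.range (n+2), cf α β n j * qq^(r*j) = 0 :=
    Ir_zero α β n r hα hβ (by omega)
  rw [hIr, zero_mul]

lemma E_gt (α β : ℕ) : ∀ n k, n < k → E α β n k = 0 := by
  intro n
  induction n with
  | zero =>
    intro k hk
    rcases k with _ | k
    · omega
    · simp [E]
  | succ n ih =>
    intro k hk
    rcases k with _ | k
    · omega
    · simp only [E]
      rw [ih k (by omega), ih (k+1) (by omega)]
      ring

lemma main (α β : ℕ) (hα : 1 ≤ α) (hβ : 1 ≤ β) :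
    ∀ n k, k ≤ n → E α β n k = Sf α β n k := by
  intro n
  induction n with
  | zero =>
    intro k hk
    have hk0 : k = 0 := by omega
    subst hk0
    rw [Sf, Finset.sum_range_one]
    simp [E, termS, qbinom_zero]
  | succ n ih =>
    intro k hk
    rcases k with _ | k
    · have hS : ∀ m, Sf α β m 0 = qint β ^ m := by
        intro m
        rw [Sf, Finset.sum_range_one]
        simp [termS, qbinom_zero]
      simp only [E]
      rw [ih 0 (by omega), hS, hS, pow_succ]
      ring
    · have h1 : E α β n k = Sf α β n k := ih k (by omega)
      have h2 : E α β n (k+1) = Sf α β n (k+1) := by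
        rcases Nat.lt_or_ge k n with h | h
        · exact ih (k+1) (by omega)
        · have hkn : k = n := by omega
          subst hkn
          rw [E_gt α β k (k+1) (by omega), S_vanish α β k hα hβ]
      simp only [E]
      rw [h1, h2, ← S_rec α β n k hα hβ (by omega)]

theorem E_explicit_formula (α β : ℕ) (hα : 1 ≤ α) (hβ : 1 ≤ β) (n k : ℕ) (hk : k ≤ n) :
    E α β n k =
      ∑ j ∈ Finset.range (k + 1),
        (-1 : K) ^ (k - j) * qq ^ ((k - j) * (k - j - 1) / 2) *
          qbinom (n + α + β) (k - j) * qbinom (j + α + β - 1) j * qint (β + j) ^ n := by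
  exact main α β hα hβ n k hk

end
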